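/- The sum over m ≥ 3 of (1/m)·(sum of 1/r for r from (m²−m)/2 to (m²+m)/2 − 1) is at most 133/52 − (18/13)·ζ(3). -/

import Mathlib

open Filter

noncomputable def trm (m : ℕ) : ℝ :=
  (1 : ℝ) / (m + 3) *
    ∑ r ∈ (Finset.Icc (((m + 3) ^ 2 - (m + 3)) / 2) (((m + 3) ^ 2 + (m + 3)) / 2 - 1) : Finset ℕ),
      (1 : ℝ) / (r : ℝ)

lemma summable_sq : Summable (fun i : ℕ => 1 / ((i : ℝ) + 1) ^ 2) := by
  have h := Real.summable_one_div_nat_pow.mpr (show 1 < 2 by norm_num)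
  have h2 := (summable_nat_add_iff 1).mpr h
  exact h2.congr (fun i => by push_cast; ring)

lemma tele {c : ℝ} (hc : 1 ≤ c) :
    HasSum (fun i : ℕ => 1 / (((i : ℝ) + c) * ((i : ℝ) + c + 1))) (1 / c) := by
  have hc0 : (0:ℝ) < c := lt_of_lt_of_le one_pos hc
  have hsum : Summable (fun i : ℕ => 1 / (((i : ℝ) + c) * ((i : ℝ) + c + 1))) := by
    refine Summable.of_nonneg_of_le (fun i => by positivity) (fun i => ?_) summable_sq
    have hi : (0:ℝ) ≤ (i:ℝ) := Nat.cast_nonneg i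
    rw [div_le_div_iff₀ (by positivity) (by positivity)]
    nlinarith
  rw [hsum.hasSum_iff_tendsto_nat]
  have key : ∀ n : ℕ, ∑ i ∈ Finset.range n, 1 / (((i : ℝ) + c) * ((i : ℝ) + c + 1))
      = 1 / c - 1 / ((n : ℝ) + c) := by
    intro n
    induction n with
    | zero => simp
    | succ n ih =>
      rw [Finset.sum_range_succ, ih]
      have h1 : (n:ℝ) + c ≠ 0 := by positivity
      have h2 : (n:ℝ) + c + 1 ≠ 0 := by positivity
      push_cast
      field_simp
      ring
  simp_rw [key]
  have h3 : Tendsto (fun n : ℕ => 1 / ((n : ℝ) + c)) atTop (nhds 0) := by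
    simp_rw [one_div]
    exact (tendsto_atTop_add_const_right atTop c tendsto_natCast_atTop_atTop).inv_tendsto_atTop
  simpa using tendsto_const_nhds.sub h3

lemma trm_nonneg (m : ℕ) : 0 ≤ trm m := by
  unfold trm
  refine mul_nonneg (by positivity) (Finset.sum_nonneg fun r _ => by positivity)

lemma trm_le (m : ℕ) : trm m ≤ 2 / (((m : ℝ) + 2) * ((m : ℝ) + 3)) := by
  unfold trm
  have hq : (m + 3) ≤ (m + 3) ^ 2 := Nat.le_self_pow (by norm_num) _
  have hpar : (m + 3) ^ 2 % 2 = (m + 3) % 2 := by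
    rcases Nat.even_or_odd (m + 3) with h | h
    · obtain ⟨k, hk⟩ := h
      rw [hk]; ring_nf; omega
    · obtain ⟨k, hk⟩ := h
      rw [hk]; ring_nf; omega
  have hprod : (m + 3) ^ 2 - (m + 3) = (m + 2) * (m + 3) := by
    rw [pow_two, ← Nat.sub_one_mul]
    norm_num
  -- bound each term of the sum
  have hP : (0:ℝ) < ((m : ℝ) + 2) * ((m : ℝ) + 3) := by positivity
  have hterm : ∀ r ∈ (Finset.Icc (((m + 3) ^ 2 - (m + 3)) / 2)
      (((m + 3) ^ 2 + (m + 3)) / 2 - 1) : Finset ℕ),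
      (1 : ℝ) / (r : ℝ) ≤ 2 / (((m : ℝ) + 2) * ((m : ℝ) + 3)) := by
    intro r hr
    rw [Finset.mem_Icc] at hr
    have h2r : (m + 2) * (m + 3) ≤ 2 * r := by
      have h1 := hr.1
      rw [hprod] at h1
      generalize hp : (m + 2) * (m + 3) = p at *
      omega
    have h2r' : ((m : ℝ) + 2) * ((m : ℝ) + 3) ≤ 2 * (r : ℝ) := by
      exact_mod_cast h2r
    have hr0 : (0:ℝ) < (r : ℝ) := by nlinarith
    rw [div_le_div_iff₀ hr0 hP]
    nlinarith
  have hcard : (Finset.Icc (((m + 3) ^ 2 - (m + 3)) / 2)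
      (((m + 3) ^ 2 + (m + 3)) / 2 - 1) : Finset ℕ).card = m + 3 := by
    rw [Nat.card_Icc]
    generalize hqe : (m + 3) ^ 2 = q at *
    omega
  have hsum := Finset.sum_le_card_nsmul _ _ _ hterm
  rw [hcard] at hsum
  have hm3 : (0:ℝ) < (m : ℝ) + 3 := by positivity
  refine le_trans (mul_le_mul_of_nonneg_left hsum (by positivity)) (le_of_eq ?_)
  rw [nsmul_eq_mul]
  push_cast
  field_simp

lemma summable_g : Summable (fun m : ℕ => 2 / (((m:ℝ)+2)*((m:ℝ)+3))) := by
  have h := ((tele (show (1:ℝ) ≤ 2 by norm_num)).summable).mul_left 2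
  exact h.congr (fun i => by ring)

lemma summable_trm : Summable trm :=
  Summable.of_nonneg_of_le trm_nonneg trm_le summable_g

lemma hasSum_tail : HasSum (fun i : ℕ => 2 / (((i:ℝ)+5)*((i:ℝ)+6))) (2/5) := by
  have h := (tele (show (1:ℝ) ≤ 5 by norm_num)).mul_left 2
  convert h using 1
  · rfl
  · funext i; ring
  · norm_num

lemma hasSum_ztail : HasSum (fun n : ℕ => 1/11 * (1/(((n:ℝ)+10)*((n:ℝ)+11)))) (1/110) := by
  have h := (tele (show (1:ℝ) ≤ 10 by norm_num)).mul_left (1/11)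
  convert h using 1
  · rfl
  · funext n; ring_nf
  · norm_num

lemma summable_z : Summable (fun n : ℕ => 1/((n:ℝ)+1)^3) := by
  refine Summable.of_nonneg_of_le (fun n => by positivity) (fun n => ?_) summable_sq
  have hn : (0:ℝ) ≤ (n:ℝ) := Nat.cast_nonneg n
  have h : ((n:ℝ)+1)^2 ≤ ((n:ℝ)+1)^3 := by nlinarith
  exact one_div_le_one_div_of_le (by positivity) h

set_option maxHeartbeats 1000000 in
lemma zeta_le : ∑' n : ℕ, 1/((n:ℝ)+1)^3 ≤ 212405554217/176033088000 := by
  have hsplit := Summable.sum_add_tsum_nat_add (f := fun n : ℕ => 1/((n:ℝ)+1)^3) 10 summable_z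
  rw [← hsplit]
  have htail : ∑' n : ℕ, 1/(((n+10:ℕ):ℝ)+1)^3 ≤ 1/110 := by
    refine le_trans (Summable.tsum_le_tsum (fun n => ?_)
      ((summable_nat_add_iff 10).mpr summable_z) hasSum_ztail.summable)
      (le_of_eq hasSum_ztail.tsum_eq)
    push_cast
    have hn : (0:ℝ) ≤ (n:ℝ) := Nat.cast_nonneg n
    rw [mul_one_div, div_le_div_iff₀ (by positivity) (by positivity)]
    nlinarith [hn, mul_nonneg hn hn, mul_nonneg (mul_nonneg hn hn) hn]
  have hhead : ∑ n ∈ Finset.range 10, 1/((n:ℝ)+1)^3 = 19164113947/16003008000 := by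
    norm_num [Finset.sum_range_succ]
  rw [hhead]
  linarith

lemma trm0 : trm 0 = 47/180 := by
  unfold trm
  rw [show (Finset.Icc (((0+3)^2-(0+3))/2) (((0+3)^2+(0+3))/2-1) : Finset ℕ) = {3,4,5} by decide]
  norm_num

lemma trm1 : trm 1 = 275/2016 := by
  unfold trm
  rw [show (Finset.Icc (((1+3)^2-(1+3))/2) (((1+3)^2+(1+3))/2-1) : Finset ℕ) = {6,7,8,9} by decide]
  norm_num

lemma trm2 : trm 2 = 25381/300300 := by
  unfold trm
  rw [show (Finset.Icc (((2+3)^2-(2+3))/2) (((2+3)^2+(2+3))/2-1) : Finset ℕ) = {10,11,12,13,14} by decide]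
  norm_num

/-- The sum over `m ≥ 3` of `(1/m) · Σ_{r = (m²−m)/2}^{(m²+m)/2 − 1} 1/r` is at most
`133/52 − (18/13)·ζ(3)`, where `ζ(3) = Σ_{n ≥ 1} 1/n³`. -/
theorem tsum_weighted_interval_sums_le :
    ∑' m : ℕ, (1 : ℝ) / (m + 3) *
        ∑ r ∈ (Finset.Icc (((m + 3) ^ 2 - (m + 3)) / 2) (((m + 3) ^ 2 + (m + 3)) / 2 - 1) : Finset ℕ),
          (1 : ℝ) / (r : ℝ) ≤
      133 / 52 - (18 / 13) * ∑' n : ℕ, 1 / ((n : ℝ) + 1) ^ 3 := by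
  show ∑' m : ℕ, trm m ≤ 133 / 52 - (18 / 13) * ∑' n : ℕ, 1 / ((n : ℝ) + 1) ^ 3
  rw [← Summable.sum_add_tsum_nat_add 3 summable_trm]
  have htail : ∑' i : ℕ, trm (i+3) ≤ 2/5 := by
    refine le_trans (Summable.tsum_le_tsum (fun i => ?_)
      ((summable_nat_add_iff 3).mpr summable_trm) hasSum_tail.summable)
      (le_of_eq hasSum_tail.tsum_eq)
    have h := trm_le (i+3)
    push_cast at h
    calc trm (i+3) ≤ 2 / (((i:ℝ)+3+2)*((i:ℝ)+3+3)) := h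
      _ = 2 / (((i:ℝ)+5)*((i:ℝ)+6)) := by ring_nf
  have hhead : ∑ i ∈ Finset.range 3, trm i = 47/180 + 275/2016 + 25381/300300 := by
    rw [Finset.sum_range_succ, Finset.sum_range_succ, Finset.sum_range_one, trm0, trm1, trm2]
  rw [hhead]
  have hz : (18:ℝ)/13 * (∑' n : ℕ, 1/((n:ℝ)+1)^3) ≤ 18/13 * (212405554217/176033088000) :=
    mul_le_mul_of_nonneg_left zeta_le (by norm_num)
  linarith
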